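/- Let d ≥ 1, let G be a d-degenerate finite simple graph on n vertices, and let H be a finite simple graph with the property that for every set Y of at most d vertices of H, the joint neighborhood N(Y) = ⋂_{y∈Y} N_H(y) (interpreted as all of V(H) when Y is empty) satisfies |N(Y)| ≥ n − |Y|. Then there exists a subgraph of H isomorphic to G; equivalently, there is an injection f : V(G) → V(H) such that f(x) and f(y) are adjacent in H whenever x and y are adjacent in G. -/

import Mathlib

/-- A finite simple graph `G` is `d`-degenerate if its vertices can be enumerated
`v_1, …, v_n` so that each `v_i` has at most `d` neighbors among `{v_j : j > i}`. -/
def IsDegenerate {V : Type*} [Fintype V] (G : SimpleGraph V) [DecidableRel G.Adj]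
    (d : ℕ) : Prop :=
  ∃ e : Fin (Fintype.card V) ≃ V, ∀ i : Fin (Fintype.card V),
    (Finset.univ.filter fun j : Fin (Fintype.card V) =>
      i < j ∧ G.Adj (e i) (e j)).card ≤ d

theorem stmt_2 {V W : Type*} [Fintype V] [DecidableEq V] [Fintype W] [DecidableEq W]
    (G : SimpleGraph V) [DecidableRel G.Adj] (H : SimpleGraph W) [DecidableRel H.Adj]
    (d n : ℕ) (hd : 1 ≤ d) (hdeg : IsDegenerate G d) (hn : Fintype.card V = n)
    (hH : ∀ Y : Finset W, Y.card ≤ d →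
      n - Y.card ≤ (Finset.univ.filter fun w => ∀ y ∈ Y, H.Adj y w).card) :
    ∃ f : V → W, Function.Injective f ∧ ∀ x y, G.Adj x y → H.Adj (f x) (f y) := by
  subst hn
  set n := Fintype.card V with hn
  by_cases hW : Nonempty W
  · obtain ⟨e, he⟩ := hdeg
    suffices h : ∀ k, k ≤ n → ∃ f : Fin n → W,
        (∀ i j : Fin n, n - k ≤ i.val → n - k ≤ j.val → f i = f j → i = j) ∧
        (∀ i j : Fin n, n - k ≤ i.val → n - k ≤ j.val →
          G.Adj (e i) (e j) → H.Adj (f i) (f j)) by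
      obtain ⟨f, hinj, hadj⟩ := h n le_rfl
      refine ⟨f ∘ e.symm, ?_, ?_⟩
      · intro x y hxy
        have := hinj _ _ (by omega) (by omega) hxy
        have := congrArg e this
        simpa using this
      · intro x y hxy
        exact hadj _ _ (by omega) (by omega) (by simpa using hxy)
    intro k
    induction k with
    | zero =>
      intro _
      exact ⟨fun _ => Classical.choice hW,
        fun i j hi _ _ => absurd hi (by omega),
        fun i j hi _ _ => absurd hi (by omega)⟩
    | succ k ih =>
      intro hk1
      obtain ⟨f, hinj, hadj⟩ := ih (by omega)
      have hkn : k < n := hk1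
      set i0 : Fin n := ⟨n - (k+1), by omega⟩ with hi0
      have hi0v : (i0 : ℕ) = n - (k+1) := rfl
      set Y : Finset W :=
        (Finset.univ.filter fun j : Fin n => i0 < j ∧ G.Adj (e i0) (e j)).image f with hY
      have hYd : Y.card ≤ d := le_trans Finset.card_image_le (he i0)
      have hNY := hH Y hYd
      set N : Finset W := Finset.univ.filter fun w => ∀ y ∈ Y, H.Adj y w with hN
      set S : Finset W := (Finset.univ.filter fun j : Fin n => n - k ≤ j.val).image f with hS
      have hSk : S.card ≤ k := by
        refine le_trans Finset.card_image_le ?_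
        have : ((Finset.univ.filter fun j : Fin n => n - k ≤ j.val)).card ≤
            (Finset.range k).card := by
          apply Finset.card_le_card_of_injOn (fun j => j.val - (n - k))
          · intro j hj
            simp only [Finset.mem_coe, Finset.mem_filter] at hj
            have := j.isLt
            simp only [Finset.mem_coe, Finset.mem_range]
            omega
          · intro a ha b hb hab
            simp only [Finset.coe_filter, Set.mem_setOf_eq] at ha hb
            have hab' : a.val - (n - k) = b.val - (n - k) := hab
            exact Fin.ext (by omega)
        simpa using this
      have hYS : Y ⊆ S := by
        intro y hy
        simp only [hY, Finset.mem_image, Finset.mem_filter] at hy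
        obtain ⟨j, ⟨-, hj1, -⟩, hj2⟩ := hy
        rw [Fin.lt_def, hi0v] at hj1
        refine Finset.mem_image.mpr ⟨j, ?_, hj2⟩
        simp only [Finset.mem_filter, Finset.mem_univ, true_and]
        omega
      have hNSY : N ∩ S ⊆ S \ Y := by
        intro w hw
        simp only [Finset.mem_inter] at hw
        refine Finset.mem_sdiff.mpr ⟨hw.2, fun hwY => ?_⟩
        have := (Finset.mem_filter.mp hw.1).2 w hwY
        exact H.irrefl this
      have hkey : 1 ≤ (N \ S).card := by
        have h1 : (N \ S).card + (N ∩ S).card = N.card := Finset.card_sdiff_add_card_inter N S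
        have h2 : (N ∩ S).card ≤ (S \ Y).card := Finset.card_le_card hNSY
        have h3 : (S \ Y).card = S.card - Y.card := Finset.card_sdiff_of_subset hYS
        have h4 : Y.card ≤ S.card := Finset.card_le_card hYS
        omega
      obtain ⟨w, hw⟩ := Finset.card_pos.mp hkey
      rw [Finset.mem_sdiff] at hw
      obtain ⟨hwN, hwS⟩ := hw
      have hwN' : ∀ y ∈ Y, H.Adj y w := (Finset.mem_filter.mp hwN).2
      have hcases : ∀ m : Fin n, n - (k+1) ≤ m.val → m = i0 ∨ n - k ≤ m.val := by
        intro m hm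
        rcases Nat.lt_or_ge m.val (n - k) with h | h
        · left; exact Fin.ext (by rw [hi0v]; omega)
        · right; exact h
      have hold : ∀ m : Fin n, n - k ≤ m.val →
          Function.update f i0 w m = f m ∧ f m ∈ S := by
        intro m hm
        have hne : m ≠ i0 := by
          intro h; rw [h, hi0v] at hm; omega
        refine ⟨Function.update_of_ne hne _ _, ?_⟩
        refine Finset.mem_image.mpr ⟨m, ?_, rfl⟩
        simp only [Finset.mem_filter, Finset.mem_univ, true_and]
        exact hm
      have hmemY : ∀ m : Fin n, n - k ≤ m.val → G.Adj (e i0) (e m) → f m ∈ Y := by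
        intro m hm hadj'
        refine Finset.mem_image.mpr ⟨m, ?_, rfl⟩
        simp only [Finset.mem_filter, Finset.mem_univ, true_and]
        exact ⟨by rw [Fin.lt_def, hi0v]; omega, hadj'⟩
      refine ⟨Function.update f i0 w, ?_, ?_⟩
      · intro i j hi hj heq
        rcases hcases i hi with hi' | hi' <;> rcases hcases j hj with hj' | hj'
        · rw [hi', hj']
        · subst hi'
          obtain ⟨hj1, hj2⟩ := hold j hj'
          rw [Function.update_self, hj1] at heq
          exact absurd (heq ▸ hj2) hwS
        · subst hj'
          obtain ⟨hi1, hi2⟩ := hold i hi'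
          rw [Function.update_self, hi1] at heq
          exact absurd (heq ▸ hi2) hwS
        · obtain ⟨hi1, -⟩ := hold i hi'
          obtain ⟨hj1, -⟩ := hold j hj'
          rw [hi1, hj1] at heq
          exact hinj i j hi' hj' heq
      · intro i j hi hj hG
        rcases hcases i hi with hi' | hi' <;> rcases hcases j hj with hj' | hj'
        · rw [hi', hj'] at hG; exact absurd hG (G.irrefl)
        · subst hi'
          obtain ⟨hj1, -⟩ := hold j hj'
          rw [Function.update_self, hj1]
          exact (hwN' (f j) (hmemY j hj' hG)).symm
        · subst hj'
          obtain ⟨hi1, -⟩ := hold i hi'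
          rw [Function.update_self, hi1]
          exact hwN' (f i) (hmemY i hi' hG.symm)
        · obtain ⟨hi1, -⟩ := hold i hi'
          obtain ⟨hj1, -⟩ := hold j hj'
          rw [hi1, hj1]
          exact hadj i j hi' hj' hG
  · have : IsEmpty W := not_nonempty_iff.mp hW
    have hW0 : Fintype.card W = 0 := Fintype.card_eq_zero
    have hn0 : n = 0 := by
      have := hH ∅ (by simp)
      simp only [Finset.card_empty, Nat.sub_zero] at this
      have hle : (Finset.univ.filter fun w => ∀ y ∈ (∅ : Finset W), H.Adj y w).card ≤
          Fintype.card W := by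
        exact le_trans (Finset.card_filter_le _ _) le_rfl
      omega
    have : IsEmpty V := Fintype.card_eq_zero_iff.mp hn0
    exact ⟨fun v => isEmptyElim v, fun v => isEmptyElim v, fun v => isEmptyElim v⟩
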